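/- Let E < E₀ and let ρ : [−1,1] → ℝ be twice continuously differentiable with ρ(−1) = ρ₋, ρ(1) = ρ₊ and 0 < ρ(u) < 1 for all u. Define Γ := log(ρ/(1−ρ)) − Φ(ρ). Then ∫_{−1}^{1} χ(ρ) (Γ')² du − ∫_{−1}^{1} (ρ' − E·χ(ρ)) Γ' du = 0. -/

import Mathlib

open Real MeasureTheory Set Filter Topology Function

noncomputable section

/-- Mobility `χ(a) = a(1−a)`. -/
def chi (a : ℝ) : ℝ := a * (1 - a)

/-- The set `𝓜`: measurable density profiles on `[−1,1]` with values in `[0,1]`. -/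
def memM (ρ : ℝ → ℝ) : Prop :=
  Measurable ρ ∧ ∀ u ∈ Set.Icc (-1:ℝ) 1, ρ u ∈ Set.Icc (0:ℝ) 1

/-- `φ ∈ 𝓕_E`, with explicit derivative function `d`: `φ` is `C¹` on `[−1,1]` with
Lipschitz derivative `d`, `φ(−1) = φ₋`, `φ(1) = φ₊`, and `d > max 0 E` on `[−1,1]`. -/
def memF (φm φp E : ℝ) (φ d : ℝ → ℝ) : Prop :=
  (∀ u ∈ Set.Icc (-1:ℝ) 1, HasDerivWithinAt φ (d u) (Set.Icc (-1:ℝ) 1) u) ∧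
  (∃ L : NNReal, LipschitzOnWith L d (Set.Icc (-1:ℝ) 1)) ∧
  φ (-1) = φm ∧ φ 1 = φp ∧
  (∀ u ∈ Set.Icc (-1:ℝ) 1, max 0 E < d u)

/-- The Euler–Lagrange equation `φ''/(φ'(φ'−E)) + 1/(1+e^φ) = ρ` holds Lebesgue-a.e.
on `(−1,1)`, where `d = φ'`. -/
def solvesEL (E : ℝ) (ρ φ d : ℝ → ℝ) : Prop :=
  ∀ᵐ u ∂(volume : Measure ℝ), u ∈ Set.Ioo (-1:ℝ) 1 →
    ∃ d2 : ℝ, HasDerivAt d d2 u ∧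
      d2 / (d u * (d u - E)) + 1 / (1 + Real.exp (φ u)) = ρ u

open scoped ENNReal NNReal

theorem monotone_stj_eq {F : ℝ → ℝ} (hF : Monotone F) (hc : Continuous F) (x : ℝ) :
    hF.stieltjesFunction x = F x := by
  rw [hF.stieltjesFunction_eq]
  exact rightLim_eq_of_tendsto (h := nhdsGT_neBot x)
    (hc.continuousAt.continuousWithinAt)

theorem lipschitz_ftc {a b : ℝ} (hab : a ≤ b) {g w : ℝ → ℝ} {L : NNReal}
    (hg : LipschitzOnWith L g (Set.Icc a b)) (hw : ContinuousOn w (Set.Icc a b))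
    (hae : ∀ᵐ u ∂(volume : Measure ℝ), u ∈ Set.Ioo a b → HasDerivAt g (w u) u) :
    ∀ x ∈ Set.Icc a b, g x = g a + ∫ t in a..x, w t := by
  obtain ⟨G, hGL, hGeq⟩ := hg.extend_real
  have hGd : ∀ x y : ℝ, x ≤ y → |G y - G x| ≤ (L : ℝ) * (y - x) := by
    intro x y hxy
    have h := hGL.dist_le_mul y x
    rw [Real.dist_eq, Real.dist_eq] at h
    calc |G y - G x| ≤ (L : ℝ) * |y - x| := h
      _ = (L : ℝ) * (y - x) := by rw [abs_of_nonneg (by linarith)]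
  have hF : Monotone (fun x => G x + (L : ℝ) * x) := by
    intro x y hxy
    have h := abs_le.1 (hGd x y hxy)
    simp only []
    nlinarith [h.1, h.2]
  have hF2 : Monotone (fun x => (L : ℝ) * x - G x) := by
    intro x y hxy
    have h := abs_le.1 (hGd x y hxy)
    simp only []
    nlinarith [h.1, h.2]
  have hFc : Continuous (fun x => G x + (L : ℝ) * x) :=
    hGL.continuous.add (continuous_const.mul continuous_id)
  have hF2c : Continuous (fun x => (L : ℝ) * x - G x) :=
    (continuous_const.mul continuous_id).sub hGL.continuous
  set μ := hF.stieltjesFunction.measure with hμdef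
  set μ2 := hF2.stieltjesFunction.measure with hμ2def
  have hμIoc : ∀ c d : ℝ, μ (Set.Ioc c d) =
      ENNReal.ofReal ((G d + L * d) - (G c + L * c)) := by
    intro c d
    rw [hμdef, StieltjesFunction.measure_Ioc, monotone_stj_eq hF hFc, monotone_stj_eq hF hFc]
  have hμ2Ioc : ∀ c d : ℝ, μ2 (Set.Ioc c d) =
      ENNReal.ofReal ((L * d - G d) - (L * c - G c)) := by
    intro c d
    rw [hμ2def, StieltjesFunction.measure_Ioc, monotone_stj_eq hF2 hF2c, monotone_stj_eq hF2 hF2c]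
  have hsum : μ + μ2 = (ENNReal.ofReal (2 * (L : ℝ))) • (volume : Measure ℝ) := by
    haveI : IsLocallyFiniteMeasure (μ + μ2) := by
      constructor
      intro x
      obtain ⟨s, hs, h1⟩ := (μ.finiteAt_nhds x)
      obtain ⟨s2, hs2, h2⟩ := (μ2.finiteAt_nhds x)
      refine ⟨s ∩ s2, Filter.inter_mem hs hs2, ?_⟩
      rw [Measure.add_apply]
      exact ENNReal.add_lt_top.2 ⟨lt_of_le_of_lt (measure_mono Set.inter_subset_left) h1,
        lt_of_le_of_lt (measure_mono Set.inter_subset_right) h2⟩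
    refine MeasureTheory.Measure.ext_of_Ioc _ _ (fun c d hcd => ?_)
    have h1 : (0:ℝ) ≤ G d + L * d - (G c + L * c) := sub_nonneg.2 (hF hcd.le)
    have h2 : (0:ℝ) ≤ L * d - G d - (L * c - G c) := sub_nonneg.2 (hF2 hcd.le)
    rw [Measure.add_apply, hμIoc, hμ2Ioc, Measure.smul_apply, Real.volume_Ioc, smul_eq_mul,
      ← ENNReal.ofReal_add h1 h2, ← ENNReal.ofReal_mul (by positivity)]
    congr 1; ring
  have hac : μ ≪ (volume : Measure ℝ) := by
    refine Measure.AbsolutelyContinuous.mk (fun s hs hs0 => ?_)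
    have h1 : μ s ≤ (μ + μ2) s := by
      rw [Measure.add_apply]; exact le_self_add
    rw [hsum, Measure.smul_apply, hs0, smul_eq_mul, mul_zero] at h1
    exact le_antisymm h1 (by positivity)
  have hder := hF.ae_hasDerivAt
  set D := fun x => (Measure.rnDeriv μ volume x).toReal with hDdef
  have hDw : ∀ᵐ x ∂(volume : Measure ℝ), x ∈ Set.Ioo a b → D x = w x + L := by
    filter_upwards [hder, hae] with x h1 h2 hx
    have hgx : HasDerivAt g (w x) x := h2 hx
    have hev : G =ᶠ[𝓝 x] g :=
      Filter.eventuallyEq_of_mem (Icc_mem_nhds hx.1 hx.2) (fun y hy => (hGeq hy).symm)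
    have hGx : HasDerivAt G (w x) x := (hev.hasDerivAt_iff).mpr hgx
    have hFx : HasDerivAt (fun y => G y + (L : ℝ) * y) (w x + L) x := by
      exact (hGx.add (((hasDerivAt_id x).const_mul (L : ℝ)))).congr_deriv (by simp)
    exact (h1.unique hFx)
  intro x hx
  have hxa : a ≤ x := hx.1
  have hIoc : Set.Ioc a x ⊆ Set.Icc a b := fun t ht => ⟨ht.1.le, ht.2.trans hx.2⟩
  have hwint : IntegrableOn w (Set.Ioc a x) volume :=
    (hw.integrableOn_Icc).mono_set hIoc
  have hDcongr : ∀ᵐ t ∂(volume : Measure ℝ).restrict (Set.Ioc a x), D t = w t + L := by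
    have hbn : ∀ᵐ t : ℝ ∂(volume : Measure ℝ), t ≠ b := by
      have : (volume : Measure ℝ) {b} = 0 := Real.volume_singleton
      exact ae_iff.2 (by simpa using this)
    refine (ae_restrict_iff' measurableSet_Ioc).2 ?_
    filter_upwards [hDw, hbn] with t h1 h2 ht
    exact h1 ⟨ht.1, lt_of_le_of_ne (ht.2.trans hx.2) h2⟩
  have hintD : ∫ t in Set.Ioc a x, D t ∂volume = (μ (Set.Ioc a x)).toReal :=
    Measure.setIntegral_toReal_rnDeriv hac _
  have hμx : (μ (Set.Ioc a x)).toReal = (G x + L * x) - (G a + L * a) := by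
    rw [hμIoc, ENNReal.toReal_ofReal (sub_nonneg.2 (hF hxa))]
  have hstep : ∫ t in Set.Ioc a x, D t ∂volume
      = (∫ t in Set.Ioc a x, w t ∂volume) + (L : ℝ) * (x - a) := by
    rw [integral_congr_ae hDcongr, integral_add hwint (integrableOn_const (by
      rw [Real.volume_Ioc]; exact ENNReal.ofReal_ne_top))]
    congr 1
    rw [setIntegral_const, measureReal_def, Real.volume_Ioc, smul_eq_mul,
      ENNReal.toReal_ofReal (by linarith : (0:ℝ) ≤ x - a), mul_comm]
  have hwx : ∫ t in Set.Ioc a x, w t ∂volume = G x - G a := by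
    have := hstep.symm.trans (hintD.trans hμx)
    linarith
  rw [intervalIntegral.integral_of_le hxa, hwx, hGeq hx, hGeq (left_mem_Icc.2 hab)]
  ring

/-- The Hamilton–Jacobi identity: with `Γ = log(ρ/(1−ρ)) − Φ(ρ)` (so that
`Γ' = ρ'/χ(ρ) − Φ(ρ)'`), one has `⟨χ(ρ) (Γ')²⟩ − ⟨ρ' − E χ(ρ), Γ'⟩ = 0`. -/
theorem stmt14 (ρm ρp φm φp E0 : ℝ)
    (h0 : 0 < ρm) (h1 : ρm < ρp) (h2 : ρp < 1)
    (hφm : φm = Real.log (ρm / (1 - ρm))) (hφp : φp = Real.log (ρp / (1 - ρp)))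
    (hE0 : E0 = (φp - φm) / 2) (E : ℝ) (hE : E < E0)
    (ρ dρ d2ρ : ℝ → ℝ)
    (hρ1 : ∀ u ∈ Set.Icc (-1:ℝ) 1, HasDerivWithinAt ρ (dρ u) (Set.Icc (-1:ℝ) 1) u)
    (hρ2 : ∀ u ∈ Set.Icc (-1:ℝ) 1, HasDerivWithinAt dρ (d2ρ u) (Set.Icc (-1:ℝ) 1) u)
    (hρ2c : ContinuousOn d2ρ (Set.Icc (-1:ℝ) 1))
    (hbc : ρ (-1) = ρm ∧ ρ 1 = ρp)
    (hbd : ∀ u ∈ Set.Icc (-1:ℝ) 1, 0 < ρ u ∧ ρ u < 1)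
    (φ dφ : ℝ → ℝ → ℝ) (φ0 d0 : ℝ → ℝ)
    (hF : memF φm φp E φ0 d0) (hEL : solvesEL E ρ φ0 d0) :
    (∫ u in (-1:ℝ)..1, chi (ρ u) * (dρ u / chi (ρ u) - d0 u)^2)
      - (∫ u in (-1:ℝ)..1, (dρ u - E * chi (ρ u)) * (dρ u / chi (ρ u) - d0 u)) = 0 := by
  have hab : (-1:ℝ) ≤ 1 := by norm_num
  obtain ⟨hφ0d, ⟨L, hLip⟩, hφ0m, hφ0p, hgt⟩ := hF
  set Icc1 := Set.Icc (-1:ℝ) 1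
  set Ioo1 := Set.Ioo (-1:ℝ) 1
  have hIoo_sub : Ioo1 ⊆ Icc1 := Set.Ioo_subset_Icc_self
  -- basic positivity
  have hd0pos : ∀ u ∈ Icc1, 0 < d0 u := fun u hu => lt_of_le_of_lt (le_max_left 0 E) (hgt u hu)
  have hd0E : ∀ u ∈ Icc1, 0 < d0 u - E :=
    fun u hu => sub_pos.2 (lt_of_le_of_lt (le_max_right 0 E) (hgt u hu))
  -- continuity facts
  have hd0c : ContinuousOn d0 Icc1 := hLip.continuousOn
  have hφ0c : ContinuousOn φ0 Icc1 := fun u hu => (hφ0d u hu).continuousWithinAt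
  have hρc : ContinuousOn ρ Icc1 := fun u hu => (hρ1 u hu).continuousWithinAt
  have hdρc : ContinuousOn dρ Icc1 := fun u hu => (hρ2 u hu).continuousWithinAt
  set σ : ℝ → ℝ := fun u => 1 / (1 + Real.exp (φ0 u)) with hσdef
  have hexp_pos : ∀ u : ℝ, (0:ℝ) < 1 + Real.exp (φ0 u) :=
    fun u => by positivity
  have hσc : ContinuousOn σ Icc1 := by
    apply ContinuousOn.div continuousOn_const
    · exact continuousOn_const.add (Real.continuous_exp.comp_continuousOn hφ0c)
    · exact fun u _ => (hexp_pos u).ne'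
  set w : ℝ → ℝ := fun u => (ρ u - σ u) * (d0 u * (d0 u - E)) with hwdef
  have hwc : ContinuousOn w Icc1 :=
    (hρc.sub hσc).mul ((hd0c.mul (hd0c.sub continuousOn_const)))
  -- a.e. derivative of d0
  have hae : ∀ᵐ u ∂(volume : Measure ℝ), u ∈ Ioo1 → HasDerivAt d0 (w u) u := by
    filter_upwards [hEL] with u h hu
    obtain ⟨d2, hd2, heq⟩ := h hu
    have hne : d0 u * (d0 u - E) ≠ 0 :=
      (mul_pos (hd0pos u (hIoo_sub hu)) (hd0E u (hIoo_sub hu))).ne'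
    have : d2 = w u := by
      have he := (hexp_pos u).ne'
      rw [hwdef]
      simp only [hσdef]
      rw [← heq, add_sub_cancel_right, div_mul_cancel₀ _ hne]
    rwa [this] at hd2
  -- FTC for d0
  have hd0ftc := lipschitz_ftc hab hLip hwc hae
  -- everywhere derivative of d0 on the interior
  have hd0deriv : ∀ u ∈ Ioo1, HasDerivAt d0 (w u) u := by
    intro u hu
    have hInt : IntervalIntegrable w volume (-1) u := by
      apply ContinuousOn.intervalIntegrable
      rw [Set.uIcc_of_le hu.1.le]
      exact hwc.mono (Set.Icc_subset_Icc le_rfl hu.2.le)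
    have hca : ContinuousAt w u :=
      (hwc.mono hIoo_sub).continuousAt (Ioo_mem_nhds hu.1 hu.2)
    have hH : HasDerivAt (fun x => d0 (-1) + ∫ t in (-1:ℝ)..x, w t) (w u) u := by
      apply HasDerivAt.const_add
      exact intervalIntegral.integral_hasDerivAt_right hInt
        (ContinuousOn.stronglyMeasurableAtFilter isOpen_Ioo (hwc.mono hIoo_sub) u hu) hca
    have hev : (fun x => d0 (-1) + ∫ t in (-1:ℝ)..x, w t) =ᶠ[𝓝 u] d0 := by
      filter_upwards [Icc_mem_nhds hu.1 hu.2] with x hx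
      exact (hd0ftc x hx).symm
    exact hev.hasDerivAt_iff.mp hH
  -- derivatives at interior points
  have hρderiv : ∀ u ∈ Ioo1, HasDerivAt ρ (dρ u) u :=
    fun u hu => (hρ1 u (hIoo_sub hu)).hasDerivAt (Icc_mem_nhds hu.1 hu.2)
  have hφ0deriv : ∀ u ∈ Ioo1, HasDerivAt φ0 (d0 u) u :=
    fun u hu => (hφ0d u (hIoo_sub hu)).hasDerivAt (Icc_mem_nhds hu.1 hu.2)
  have hσderiv : ∀ u ∈ Ioo1,
      HasDerivAt σ (-(Real.exp (φ0 u) * d0 u) / (1 + Real.exp (φ0 u))^2) u := by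
    intro u hu
    have h1 : HasDerivAt (fun x => 1 + Real.exp (φ0 x)) (Real.exp (φ0 u) * d0 u) u :=
      ((hφ0deriv u hu).exp).const_add 1
    have h2 := h1.inv (hexp_pos u).ne'
    simp only [hσdef, one_div]
    exact h2
  -- the potential F and its derivative P
  set P : ℝ → ℝ := fun u => (E - d0 u) * dρ u + chi (ρ u) * (d0 u * (d0 u - E)) with hPdef
  set F : ℝ → ℝ := fun u => (E - d0 u) * (ρ u + σ u) + d0 u with hFdef
  have hFderiv : ∀ u ∈ Ioo1, HasDerivAt F (P u) u := by
    intro u hu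
    have hd := hd0deriv u hu
    have hr := hρderiv u hu
    have hs := hσderiv u hu
    have h1 : HasDerivAt F ((0 - w u) * (ρ u + σ u)
        + (E - d0 u) * (dρ u + (-(Real.exp (φ0 u) * d0 u) / (1 + Real.exp (φ0 u))^2))
        + w u) u := by
      exact (((hasDerivAt_const u E).sub hd).mul (hr.add hs)).add hd
    convert h1 using 1
    have he := hexp_pos u
    have hσval : σ u = 1 / (1 + Real.exp (φ0 u)) := rfl
    simp only [hPdef, hwdef, chi, hσval]
    field_simp
    ring
  -- FTC-2 for F
  have hFcont : ContinuousOn F Icc1 :=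
    ((continuousOn_const.sub hd0c).mul (hρc.add hσc)).add hd0c
  have hPcont : ContinuousOn P Icc1 := by
    apply ContinuousOn.add
    · exact (continuousOn_const.sub hd0c).mul hdρc
    · exact ((hρc.mul (continuousOn_const.sub hρc)).mul
        (hd0c.mul (hd0c.sub continuousOn_const))).congr (fun u hu => by rw [chi]; rfl)
  have hPint : IntervalIntegrable P volume (-1) 1 := by
    apply ContinuousOn.intervalIntegrable
    rwa [Set.uIcc_of_le hab]
  have hftc2 : ∫ u in (-1:ℝ)..1, P u = F 1 - F (-1) :=
    intervalIntegral.integral_eq_sub_of_hasDeriv_right_of_le hab hFcont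
      (fun u hu => (hFderiv u hu).hasDerivWithinAt) hPint
  -- boundary values
  have hρppos : 0 < ρp := h0.trans h1
  have hρm1 : ρm < 1 := h1.trans h2
  have hσ1 : σ 1 = 1 - ρp := by
    have : Real.exp (φ0 1) = ρp / (1 - ρp) := by
      rw [hφ0p, hφp, Real.exp_log (div_pos hρppos (by linarith))]
    have h1ρ : (1:ℝ) - ρp ≠ 0 := by linarith
    simp only [hσdef]
    rw [this]
    rw [eq_comm, eq_div_iff (by have := div_pos hρppos (show (0:ℝ) < 1 - ρp by linarith); linarith : (0:ℝ) < 1 + ρp / (1 - ρp)).ne']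
    field_simp
    ring
  have hσm1 : σ (-1) = 1 - ρm := by
    have : Real.exp (φ0 (-1)) = ρm / (1 - ρm) := by
      rw [hφ0m, hφm, Real.exp_log (div_pos h0 (by linarith))]
    have h1ρ : (1:ℝ) - ρm ≠ 0 := by linarith
    simp only [hσdef]
    rw [this]
    rw [eq_comm, eq_div_iff (by have := div_pos h0 (show (0:ℝ) < 1 - ρm by linarith); linarith : (0:ℝ) < 1 + ρm / (1 - ρm)).ne']
    field_simp
    ring
  have hF1 : F 1 = E := by
    simp only [hFdef, hσ1, hbc.2]; ring
  have hFm1 : F (-1) = E := by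
    simp only [hFdef, hσm1, hbc.1]; ring
  -- combine
  have hchine : ∀ u ∈ Icc1, chi (ρ u) ≠ 0 := by
    intro u hu
    have := hbd u hu
    rw [chi]
    exact ne_of_gt (mul_pos this.1 (by linarith [this.2]))
  have hchic : ContinuousOn (fun u => chi (ρ u)) Icc1 :=
    (hρc.mul (continuousOn_const.sub hρc)).congr (fun u hu => by rw [chi]; rfl)
  have hGc : ContinuousOn (fun u => dρ u / chi (ρ u) - d0 u) Icc1 :=
    (hdρc.div hchic hchine).sub hd0c
  have hint1 : IntervalIntegrable (fun u => chi (ρ u) * (dρ u / chi (ρ u) - d0 u)^2)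
      volume (-1) 1 := by
    apply ContinuousOn.intervalIntegrable
    rw [Set.uIcc_of_le hab]
    exact hchic.mul (hGc.pow 2)
  have hint2 : IntervalIntegrable (fun u => (dρ u - E * chi (ρ u)) * (dρ u / chi (ρ u) - d0 u))
      volume (-1) 1 := by
    apply ContinuousOn.intervalIntegrable
    rw [Set.uIcc_of_le hab]
    exact (hdρc.sub (continuousOn_const.mul hchic)).mul hGc
  rw [← intervalIntegral.integral_sub hint1 hint2]
  have heqP : Set.EqOn (fun u => chi (ρ u) * (dρ u / chi (ρ u) - d0 u)^2
      - (dρ u - E * chi (ρ u)) * (dρ u / chi (ρ u) - d0 u)) P (Set.uIcc (-1:ℝ) 1) := by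
    intro u hu
    rw [Set.uIcc_of_le hab] at hu
    have hne := hchine u hu
    have hρ0 := (hbd u hu).1.ne'
    have hρ1' : 1 - ρ u ≠ 0 := (sub_pos.2 (hbd u hu).2).ne'
    simp only [hPdef, chi] at hne ⊢
    field_simp
    ring
  rw [intervalIntegral.integral_congr heqP, hftc2, hF1, hFm1]
  ring
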